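/- Fix V̄ > 0 and α ∈ (0,1). Counted with multiplicity, the mass polynomial 𝒫_α has either no zeros in (0,∞) or exactly two. It has exactly two zeros h₁ ≤ h₂ in (0,∞) if and only if V̄ ≥ L(α); in that case, h₁ = ((1/α) − 1)^{1/4} = h₂ if V̄ = L(α), and h₁ < ((1/α) − 1)^{1/4} < h₂ if V̄ > L(α). -/

import Mathlib

open Polynomial

/-- The mass polynomial 𝒫_α as a polynomial over ℝ:
𝒫_α = α X^6 + 3α X^4 − 4V̄ X^3 + 3(1−α) X^2 + (1−α). -/
noncomputable def massP (Vbar α : ℝ) : Polynomial ℝ :=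
  C α * X ^ 6 + C (3 * α) * X ^ 4 - C (4 * Vbar) * X ^ 3 + C (3 * (1 - α)) * X ^ 2 + C (1 - α)

/-- The limiting function L(α) = α^{3/4}(1−α)^{1/4} + α^{1/4}(1−α)^{3/4}. -/
noncomputable def Lfun (α : ℝ) : ℝ :=
  α ^ ((3 : ℝ) / 4) * (1 - α) ^ ((1 : ℝ) / 4) + α ^ ((1 : ℝ) / 4) * (1 - α) ^ ((3 : ℝ) / 4)

private noncomputable def Ffun (α h : ℝ) : ℝ :=
  (α*h^6 + 3*α*h^4 + 3*(1-α)*h^2 + (1-α)) / (4*h^3)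

private lemma massP_eval (Vbar α x : ℝ) :
    (massP Vbar α).eval x = α*x^6 + 3*α*x^4 - 4*Vbar*x^3 + 3*(1-α)*x^2 + (1-α) := by
  first | (simp [massP]; ring) | simp [massP]

private lemma massP_deriv_eval (Vbar α x : ℝ) :
    (massP Vbar α).derivative.eval x
      = 6*α*x^5 + 12*α*x^3 - 12*Vbar*x^2 + 6*(1-α)*x := by
  first | (simp [massP]; ring) | simp [massP]

private lemma massP_deriv2_eval (Vbar α x : ℝ) :
    (massP Vbar α).derivative.derivative.eval x
      = 30*α*x^4 + 36*α*x^2 - 24*Vbar*x + 6*(1-α) := by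
  first | (simp [massP]; ring) | simp [massP]

private lemma massP_ne_zero {α : ℝ} (hα : α < 1) (Vbar : ℝ) : massP Vbar α ≠ 0 := by
  intro h
  have := massP_eval Vbar α 0
  rw [h] at this
  simp at this
  linarith

private lemma eval_eq_F {x : ℝ} (hx : x ≠ 0) (Vbar α : ℝ) :
    (massP Vbar α).eval x = 4*x^3 * (Ffun α x - Vbar) := by
  rw [massP_eval, Ffun]
  field_simp
  ring

private noncomputable def hS (α : ℝ) : ℝ := (1/α - 1) ^ ((1:ℝ)/4)

private lemma AB_exists {α : ℝ} (hα : α ∈ Set.Ioo (0:ℝ) 1) :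
    ∃ A B : ℝ, 0 < A ∧ 0 < B ∧ A^4 = α ∧ B^4 = 1 - α ∧
      hS α = B / A ∧ Lfun α = A^3*B + A*B^3 := by
  obtain ⟨hα0, hα1⟩ := hα
  have h1 : (0:ℝ) < 1 - α := by linarith
  refine ⟨α ^ ((1:ℝ)/4), (1-α) ^ ((1:ℝ)/4), Real.rpow_pos_of_pos hα0 _,
    Real.rpow_pos_of_pos h1 _, ?_, ?_, ?_, ?_⟩
  · rw [← Real.rpow_natCast (α ^ ((1:ℝ)/4)) 4, ← Real.rpow_mul hα0.le]; norm_num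
  · rw [← Real.rpow_natCast ((1-α) ^ ((1:ℝ)/4)) 4, ← Real.rpow_mul h1.le]; norm_num
  · rw [hS, show 1/α - 1 = (1-α)/α by field_simp, Real.div_rpow h1.le hα0.le]
  · rw [Lfun, ← Real.rpow_natCast (α ^ ((1:ℝ)/4)) 3, ← Real.rpow_mul hα0.le,
      ← Real.rpow_natCast ((1-α) ^ ((1:ℝ)/4)) 3, ← Real.rpow_mul h1.le]
    norm_num

private lemma hS_pos {α : ℝ} (hα : α ∈ Set.Ioo (0:ℝ) 1) : 0 < hS α := by
  obtain ⟨A, B, hA, hB, _, _, hsd, _⟩ := AB_exists hα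
  rw [hsd]; positivity

private lemma hS_pow4 {α : ℝ} (hα : α ∈ Set.Ioo (0:ℝ) 1) : α * (hS α)^4 = 1 - α := by
  obtain ⟨A, B, hA, hB, hA4, hB4, hsd, _⟩ := AB_exists hα
  rw [hsd, div_pow, ← hB4, ← hA4]
  field_simp

private lemma F_hS {α : ℝ} (hα : α ∈ Set.Ioo (0:ℝ) 1) : Ffun α (hS α) = Lfun α := by
  obtain ⟨A, B, hA, hB, hA4, hB4, hsd, hL⟩ := AB_exists hα
  rw [hsd, hL, Ffun, show (1:ℝ) - α = B^4 from hB4.symm, ← hA4]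
  have hA' := hA.ne'
  have hB' := hB.ne'
  field_simp
  ring

private lemma F_hasDeriv {α x : ℝ} (hx : x ≠ 0) :
    HasDerivAt (Ffun α) ((3*(x^2+1)*(α*x^4-(1-α)))/(4*x^4)) x := by
  have hN : HasDerivAt (fun h : ℝ => α*h^6 + 3*α*h^4 + 3*(1-α)*h^2 + (1-α))
      ((α*((6:ℕ)*x^5) + 3*α*((4:ℕ)*x^3)) + 3*(1-α)*((2:ℕ)*x^1)) x := by
    exact ((((hasDerivAt_pow 6 x).const_mul α).add
      ((hasDerivAt_pow 4 x).const_mul (3*α))).add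
      ((hasDerivAt_pow 2 x).const_mul (3*(1-α)))).add_const (1-α)
  have hD : HasDerivAt (fun h : ℝ => 4*h^3) (4*((3:ℕ)*x^2)) x :=
    (hasDerivAt_pow 3 x).const_mul 4
  have hD0 : (4*x^3) ≠ 0 := mul_ne_zero (by norm_num) (pow_ne_zero _ hx)
  have := hN.div hD hD0
  refine this.congr_deriv ?_
  have h4 : (4:ℝ)*x^4 ≠ 0 := mul_ne_zero (by norm_num) (pow_ne_zero _ hx)
  field_simp
  ring

private lemma F_anti {α : ℝ} (hα : α ∈ Set.Ioo (0:ℝ) 1) :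
    StrictAntiOn (Ffun α) (Set.Ioc 0 (hS α)) := by
  apply strictAntiOn_of_deriv_neg (convex_Ioc _ _)
  · intro x hx
    exact (F_hasDeriv (ne_of_gt hx.1)).continuousAt.continuousWithinAt
  · intro x hx
    rw [interior_Ioc] at hx
    rw [(F_hasDeriv (ne_of_gt hx.1)).deriv]
    have h4 : α * x^4 < 1 - α := by
      rw [← hS_pow4 hα]
      have := pow_lt_pow_left₀ hx.2 hx.1.le (by norm_num : (4:ℕ) ≠ 0)
      nlinarith [hα.1]
    have hx4 : (0:ℝ) < 4*x^4 := mul_pos (by norm_num) (pow_pos hx.1 4)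
    apply div_neg_of_neg_of_pos _ hx4
    nlinarith [sq_nonneg x]

private lemma F_mono {α : ℝ} (hα : α ∈ Set.Ioo (0:ℝ) 1) :
    StrictMonoOn (Ffun α) (Set.Ici (hS α)) := by
  apply strictMonoOn_of_deriv_pos (convex_Ici _)
  · intro x hx
    have : (0:ℝ) < x := lt_of_lt_of_le (hS_pos hα) hx
    exact (F_hasDeriv this.ne').continuousAt.continuousWithinAt
  · intro x hx
    rw [interior_Ici] at hx
    have hx0 : (0:ℝ) < x := lt_trans (hS_pos hα) hx
    rw [(F_hasDeriv hx0.ne').deriv]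
    have h4 : 1 - α < α * x^4 := by
      rw [← hS_pow4 hα]
      have := pow_lt_pow_left₀ hx (hS_pos hα).le (by norm_num : (4:ℕ) ≠ 0)
      nlinarith [hα.1]
    have hx4 : (0:ℝ) < 4*x^4 := mul_pos (by norm_num) (pow_pos hx0 4)
    apply div_pos _ hx4
    nlinarith [sq_nonneg x]

private lemma F_min {α x : ℝ} (hα : α ∈ Set.Ioo (0:ℝ) 1) (hx : 0 < x) (hne : x ≠ hS α) :
    Lfun α < Ffun α x := by
  rcases lt_or_gt_of_ne hne with h | h
  · have := F_anti hα (Set.mem_Ioc.mpr ⟨hx, h.le⟩)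
      (Set.mem_Ioc.mpr ⟨hS_pos hα, le_refl _⟩) h
    rw [F_hS hα] at this; exact this
  · have := F_mono hα (Set.mem_Ici.mpr (le_refl _)) (Set.mem_Ici.mpr h.le) h
    rw [F_hS hα] at this; exact this

private lemma F_contOn {α a b : ℝ} (ha : 0 < a) :
    ContinuousOn (Ffun α) (Set.Icc a b) := by
  intro x hx
  exact (F_hasDeriv (lt_of_lt_of_le ha hx.1).ne').continuousAt.continuousWithinAt

private lemma exists_left {Vbar α : ℝ} (hV : 0 < Vbar) (hα : α ∈ Set.Ioo (0:ℝ) 1)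
    (hLV : Lfun α < Vbar) : ∃ a, 0 < a ∧ a < hS α ∧ Ffun α a = Vbar := by
  set s := hS α with hs
  have hs0 := hS_pos hα
  have h1 : (0:ℝ) < 1 - α := by linarith [hα.2]
  set c : ℝ := ((1-α)/(4*Vbar)) ^ ((1:ℝ)/3) with hc
  have hcpos : 0 < c := Real.rpow_pos_of_pos (by positivity) _
  set h₀ : ℝ := min s c with hh0
  have hh0pos : 0 < h₀ := lt_min hs0 hcpos
  have hc3 : c^3 = (1-α)/(4*Vbar) := by
    rw [hc, ← Real.rpow_natCast (((1-α)/(4*Vbar)) ^ ((1:ℝ)/3)) 3,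
      ← Real.rpow_mul (by positivity)]
    norm_num
  have hF0 : Vbar ≤ Ffun α h₀ := by
    have hcube : h₀^3 ≤ (1-α)/(4*Vbar) := by
      rw [← hc3]
      exact pow_le_pow_left₀ hh0pos.le (min_le_right _ _) 3
    rw [le_div_iff₀ (by positivity)] at hcube
    have key : Vbar ≤ (1-α)/(4*h₀^3) := by
      rw [le_div_iff₀ (by positivity)]
      nlinarith
    refine le_trans key ?_
    rw [Ffun, div_le_div_iff₀ (by positivity) (by positivity)]
    have h6 : (0:ℝ) ≤ α*h₀^6 + 3*α*h₀^4 + 3*(1-α)*h₀^2 := by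
      have := hα.1
      positivity
    nlinarith [pow_pos hh0pos 3]
  have hivt := intermediate_value_Icc' (f := Ffun α) (min_le_left s c) (F_contOn hh0pos)
  have hmem : Vbar ∈ Set.Icc (Ffun α s) (Ffun α h₀) := by
    rw [F_hS hα]
    exact ⟨hLV.le, hF0⟩
  obtain ⟨a, ha, hFa⟩ := hivt hmem
  refine ⟨a, lt_of_lt_of_le hh0pos ha.1, lt_of_le_of_ne ha.2 ?_, hFa⟩
  intro h
  rw [h, F_hS hα] at hFa
  linarith

private lemma exists_right {Vbar α : ℝ} (hV : 0 < Vbar) (hα : α ∈ Set.Ioo (0:ℝ) 1)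
    (hLV : Lfun α < Vbar) : ∃ b, hS α < b ∧ Ffun α b = Vbar := by
  set s := hS α with hs
  have hs0 := hS_pos hα
  set c : ℝ := ((4*Vbar)/α) ^ ((1:ℝ)/3) with hc
  have hα0 := hα.1
  have hcpos : 0 < c := Real.rpow_pos_of_pos (by positivity) _
  set h₁ : ℝ := max s c with hh1
  have hh1pos : 0 < h₁ := lt_of_lt_of_le hs0 (le_max_left _ _)
  have hc3 : c^3 = (4*Vbar)/α := by
    rw [hc, ← Real.rpow_natCast (((4*Vbar)/α) ^ ((1:ℝ)/3)) 3,
      ← Real.rpow_mul (by positivity)]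
    norm_num
  have hF1 : Vbar ≤ Ffun α h₁ := by
    have hcube : (4*Vbar)/α ≤ h₁^3 := by
      rw [← hc3]
      exact pow_le_pow_left₀ hcpos.le (le_max_right _ _) 3
    have key : Vbar ≤ α*h₁^3/4 := by
      rw [div_le_iff₀ hα0] at hcube
      nlinarith
    refine le_trans key ?_
    rw [Ffun, div_le_div_iff₀ (by positivity) (by positivity)]
    have h1 : (0:ℝ) < 1 - α := by linarith [hα.2]
    have h6 : (0:ℝ) ≤ 3*α*h₁^4 + 3*(1-α)*h₁^2 + (1-α) := by positivity
    nlinarith [pow_pos hh1pos 3]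
  have hivt := intermediate_value_Icc (f := Ffun α) (le_max_left s c) (F_contOn hs0)
  have hmem : Vbar ∈ Set.Icc (Ffun α s) (Ffun α h₁) := by
    rw [F_hS hα]
    exact ⟨hLV.le, hF1⟩
  obtain ⟨b, hb, hFb⟩ := hivt hmem
  refine ⟨b, lt_of_le_of_ne hb.1 ?_, hFb⟩
  intro h
  rw [← h, F_hS hα] at hFb
  linarith

private lemma root_pos {Vbar α x : ℝ} (hV : 0 < Vbar) (hα : α ∈ Set.Ioo (0:ℝ) 1)
    (hroot : (massP Vbar α).eval x = 0) : 0 < x ∧ Ffun α x = Vbar := by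
  have hα0 := hα.1
  have hα1 : (0:ℝ) < 1 - α := by linarith [hα.2]
  rcases le_or_gt x 0 with hx | hx
  · exfalso
    rw [massP_eval] at hroot
    have hx3 : x^3 ≤ 0 := Odd.pow_nonpos (by decide) hx
    nlinarith [sq_nonneg (x^3), sq_nonneg (x^2), sq_nonneg x, mul_nonneg hα0.le (sq_nonneg (x^3)),
      mul_nonneg hα0.le (sq_nonneg (x^2)), mul_nonneg hα1.le (sq_nonneg x),
      mul_nonneg hV.le (neg_nonneg.mpr hx3)]
  · refine ⟨hx, ?_⟩
    rw [eval_eq_F hx.ne' Vbar α] at hroot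
    have h3 : (0:ℝ) < 4*x^3 := by positivity
    have := mul_eq_zero.mp hroot
    rcases this with h | h
    · exact absurd h h3.ne'
    · linarith

private lemma deriv_at_root {Vbar α a : ℝ} (ha : 0 < a) (hroot : Ffun α a = Vbar) :
    (massP Vbar α).derivative.eval a = 3*(a^2+1)*(α*a^4-(1-α))/a := by
  rw [massP_deriv_eval]
  have h4 : α*a^6+3*α*a^4+3*(1-α)*a^2+(1-α) = Vbar * (4*a^3) := by
    rw [← hroot, Ffun, div_mul_cancel₀]
    positivity
  rw [eq_div_iff ha.ne']
  linear_combination (3 : ℝ) * h4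

private lemma deriv_ne_zero {Vbar α a : ℝ} (hα : α ∈ Set.Ioo (0:ℝ) 1) (ha : 0 < a)
    (hroot : Ffun α a = Vbar) (hne : a ≠ hS α) :
    (massP Vbar α).derivative.eval a ≠ 0 := by
  rw [deriv_at_root ha hroot]
  have hα0 := hα.1
  have h2 : α*a^4 - (1-α) ≠ 0 := by
    intro h
    apply hne
    have hs4 := hS_pow4 hα
    have h4 : a^4 = (hS α)^4 := by
      have : α * a^4 = α * (hS α)^4 := by linarith
      exact mul_left_cancel₀ hα0.ne' this
    rcases lt_trichotomy a (hS α) with hlt | heq | hgt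
    · have := pow_lt_pow_left₀ hlt ha.le (by norm_num : (4:ℕ) ≠ 0)
      linarith [this, h4.le, h4.ge]
    · exact heq
    · have := pow_lt_pow_left₀ hgt (hS_pos hα).le (by norm_num : (4:ℕ) ≠ 0)
      linarith [this, h4.le, h4.ge]
  have h1 : (0:ℝ) < 3*(a^2+1) := by positivity
  exact div_ne_zero (mul_ne_zero h1.ne' h2) ha.ne'

private lemma isRoot_hS {α : ℝ} (hα : α ∈ Set.Ioo (0:ℝ) 1) :
    (massP (Lfun α) α).IsRoot (hS α) := by
  rw [IsRoot, eval_eq_F (hS_pos hα).ne', F_hS hα]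
  ring

private lemma deriv_at_hS {α : ℝ} (hα : α ∈ Set.Ioo (0:ℝ) 1) :
    (massP (Lfun α) α).derivative.eval (hS α) = 0 := by
  rw [deriv_at_root (hS_pos hα) (F_hS hα)]
  have h0 : α*(hS α)^4 - (1-α) = 0 := by rw [hS_pow4 hα]; ring
  rw [h0]
  simp

private lemma deriv2_at_hS {α : ℝ} (hα : α ∈ Set.Ioo (0:ℝ) 1) :
    (massP (Lfun α) α).derivative.derivative.eval (hS α) ≠ 0 := by
  rw [massP_deriv2_eval]
  set s := hS α with hs
  have hs0 : 0 < s := hS_pos hα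
  have hs4 : α * s^4 = 1 - α := hS_pow4 hα
  have hα1 : (0:ℝ) < 1 - α := by linarith [hα.2]
  have hN : α*s^6+3*α*s^4+3*(1-α)*s^2+(1-α) = Lfun α * (4*s^3) := by
    rw [← F_hS hα, Ffun, div_mul_cancel₀ _ (ne_of_gt (mul_pos four_pos (pow_pos hs0 3)))]
  have key : (30*α*s^4 + 36*α*s^2 - 24*(Lfun α)*s + 6*(1-α))*s^2 = 12*(1-α)*(s^2+1) := by
    linear_combination (6 : ℝ) * hN + (24*s^2+18) * hs4
  intro h
  rw [h, zero_mul] at key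
  nlinarith [sq_nonneg s]

private lemma mult_one {Vbar α a : ℝ} (hα : α ∈ Set.Ioo (0:ℝ) 1) (ha : 0 < a)
    (hroot : Ffun α a = Vbar) (hne : a ≠ hS α) :
    (massP Vbar α).rootMultiplicity a = 1 := by
  have hp0 := massP_ne_zero hα.2 Vbar
  have hisroot : (massP Vbar α).IsRoot a := by
    rw [IsRoot, eval_eq_F ha.ne', hroot]
    ring
  refine le_antisymm ?_ ((rootMultiplicity_pos hp0).mpr hisroot)
  by_contra hgt
  push_neg at hgt
  have := (one_lt_rootMultiplicity_iff_isRoot hp0).mp hgt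
  exact deriv_ne_zero hα ha hroot hne this.2

private lemma mult_two {α : ℝ} (hα : α ∈ Set.Ioo (0:ℝ) 1) :
    (massP (Lfun α) α).rootMultiplicity (hS α) = 2 := by
  have hp0 := massP_ne_zero hα.2 (Lfun α)
  have h1 : 1 < (massP (Lfun α) α).rootMultiplicity (hS α) :=
    (one_lt_rootMultiplicity_iff_isRoot hp0).mpr ⟨isRoot_hS hα, deriv_at_hS hα⟩
  have h2 : ¬ 2 < (massP (Lfun α) α).rootMultiplicity (hS α) := by
    intro h
    have hit := (lt_rootMultiplicity_iff_isRoot_iterate_derivative hp0).mp h 2 le_rfl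
    have hiter : (Polynomial.derivative)^[2] (massP (Lfun α) α)
        = (massP (Lfun α) α).derivative.derivative := by
      rw [Function.iterate_succ_apply', Function.iterate_one]
    rw [hiter] at hit
    exact deriv2_at_hS hα hit
  omega

private lemma roots_eq_two {Vbar α : ℝ} (hV : 0 < Vbar) (hα : α ∈ Set.Ioo (0:ℝ) 1)
    (hLV : Lfun α < Vbar) :
    ∃ a b : ℝ, 0 < a ∧ a < hS α ∧ hS α < b ∧ (massP Vbar α).roots = {a, b} := by
  obtain ⟨a, ha0, haS, hFa⟩ := exists_left hV hα hLV
  obtain ⟨b, hbS, hFb⟩ := exists_right hV hα hLV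
  have hp0 := massP_ne_zero hα.2 Vbar
  have hb0 : 0 < b := lt_trans (hS_pos hα) hbS
  refine ⟨a, b, ha0, haS, hbS, ?_⟩
  have hab : a ≠ b := by intro h; rw [h] at haS; linarith
  ext x
  rw [count_roots]
  by_cases hxa : x = a
  · subst hxa
    rw [mult_one hα ha0 hFa haS.ne]
    simp [hab]
  · by_cases hxb : x = b
    · subst hxb
      rw [mult_one hα hb0 hFb hbS.ne']
      simp [hxa, (fun h => hxa h.symm : ¬ a = x)]
    · rw [rootMultiplicity_eq_zero]
      · simp [Ne.symm hxa, Ne.symm hxb, hxa, hxb]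
      · intro hroot
        obtain ⟨hx0, hFx⟩ := root_pos hV hα hroot
        have hxS : x ≠ hS α := by
          intro h
          rw [h, F_hS hα] at hFx
          linarith
        rcases lt_or_gt_of_ne hxS with hlt | hgt
        · exact hxa ((F_anti hα).injOn ⟨hx0, hlt.le⟩ ⟨ha0, haS.le⟩ (by rw [hFx, hFa]))
        · exact hxb ((F_mono hα).injOn (Set.mem_Ici.mpr hgt.le) (Set.mem_Ici.mpr hbS.le)
            (by rw [hFx, hFb]))

private lemma roots_eq_double {Vbar α : ℝ} (hV : 0 < Vbar) (hα : α ∈ Set.Ioo (0:ℝ) 1)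
    (hLV : Vbar = Lfun α) :
    (massP Vbar α).roots = {hS α, hS α} := by
  subst hLV
  have hp0 := massP_ne_zero hα.2 (Lfun α)
  ext x
  rw [count_roots]
  by_cases hx : x = hS α
  · subst hx
    rw [mult_two hα]
    simp
  · rw [rootMultiplicity_eq_zero]
    · simp [hx]
    · intro hroot
      obtain ⟨hx0, hFx⟩ := root_pos hV hα hroot
      exact absurd hFx (F_min hα hx0 hx).ne'

private lemma roots_eq_zero {Vbar α : ℝ} (hV : 0 < Vbar) (hα : α ∈ Set.Ioo (0:ℝ) 1)
    (hLV : Vbar < Lfun α) :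
    (massP Vbar α).roots = 0 := by
  rw [Multiset.eq_zero_iff_forall_notMem]
  intro x hx
  rw [mem_roots (massP_ne_zero hα.2 Vbar)] at hx
  obtain ⟨hx0, hFx⟩ := root_pos hV hα hx
  by_cases h : x = hS α
  · rw [h, F_hS hα] at hFx; linarith
  · have := F_min hα hx0 h; linarith

private lemma hS_def (α : ℝ) : hS α = (1/α - 1) ^ ((1:ℝ)/4) := rfl

private lemma card_pair (a b : ℝ) : Multiset.card ({a, b} : Multiset ℝ) = 2 := by
  simp

theorem stmt2 (Vbar α : ℝ) (hV : 0 < Vbar) (hα : α ∈ Set.Ioo (0 : ℝ) 1) :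
    let R := (massP Vbar α).roots.filter (fun x => 0 < x)
    (Multiset.card R = 0 ∨ Multiset.card R = 2) ∧
    (Multiset.card R = 2 ↔ Lfun α ≤ Vbar) ∧
    (∀ h₁ h₂ : ℝ, h₁ ≤ h₂ → R = {h₁, h₂} →
      (Vbar = Lfun α → h₁ = (1 / α - 1) ^ ((1 : ℝ) / 4) ∧ h₂ = (1 / α - 1) ^ ((1 : ℝ) / 4)) ∧
      (Lfun α < Vbar → h₁ < (1 / α - 1) ^ ((1 : ℝ) / 4) ∧ (1 / α - 1) ^ ((1 : ℝ) / 4) < h₂)) := by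
  intro R
  have hR : R = (massP Vbar α).roots.filter (fun x => 0 < x) := rfl
  rcases lt_trichotomy Vbar (Lfun α) with hlt | heq | hgt
  · -- V̄ < L : no roots
    have h0 : R = 0 := by rw [hR, roots_eq_zero hV hα hlt]; rfl
    refine ⟨Or.inl (by rw [h0]; rfl), ⟨?_, ?_⟩, ?_⟩
    · intro h; rw [h0] at h; simp at h
    · intro h; exact absurd h (not_le.mpr hlt)
    · intro h₁ h₂ _ hRe
      rw [h0] at hRe
      exfalso
      have := congrArg Multiset.card hRe
      simp at this
  · -- V̄ = L : double root at hS
    have hroots := roots_eq_double hV hα heq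
    have hfil : R = {hS α, hS α} := by
      rw [hR, hroots, Multiset.filter_eq_self.mpr]
      intro x hx
      simp only [Multiset.insert_eq_cons, Multiset.mem_cons, Multiset.mem_singleton, or_self] at hx
      rw [hx]
      exact hS_pos hα
    have hcard2 : Multiset.card R = 2 := by rw [hfil]; exact card_pair _ _
    refine ⟨Or.inr hcard2, ⟨fun _ => heq.ge, fun _ => hcard2⟩, ?_⟩
    intro h₁ h₂ _ hRe
    have heqm : ({hS α, hS α} : Multiset ℝ) = {h₁, h₂} := hfil.symm.trans hRe
    have h1 : h₁ = hS α := by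
      have : h₁ ∈ ({h₁, h₂} : Multiset ℝ) := by simp
      rw [← heqm] at this
      simpa using this
    have h2 : h₂ = hS α := by
      have : h₂ ∈ ({h₁, h₂} : Multiset ℝ) := by simp
      rw [← heqm] at this
      simpa using this
    constructor
    · intro _
      rw [← hS_def]
      exact ⟨h1, h2⟩
    · intro h
      rw [heq] at h
      exact absurd h (lt_irrefl _)
  · -- L < V̄ : two simple roots
    obtain ⟨a, b, ha0, haS, hbS, hroots⟩ := roots_eq_two hV hα hgt
    have hb0 : 0 < b := lt_trans (hS_pos hα) hbS
    have hab : a < b := lt_trans haS hbS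
    have hfil : R = {a, b} := by
      rw [hR, hroots, Multiset.filter_eq_self.mpr]
      intro x hx
      simp only [Multiset.insert_eq_cons, Multiset.mem_cons, Multiset.mem_singleton] at hx
      rcases hx with h | h
      · rw [h]; exact ha0
      · rw [h]; exact hb0
    have hcard2 : Multiset.card R = 2 := by rw [hfil]; exact card_pair _ _
    refine ⟨Or.inr hcard2, ⟨fun _ => hgt.le, fun _ => hcard2⟩, ?_⟩
    intro h₁ h₂ hle hRe
    have heqm : ({a, b} : Multiset ℝ) = {h₁, h₂} := hfil.symm.trans hRe
    have hm1 : h₁ = a ∨ h₁ = b := by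
      have : h₁ ∈ ({h₁, h₂} : Multiset ℝ) := by simp
      rw [← heqm] at this
      simpa using this
    have hm2 : h₂ = a ∨ h₂ = b := by
      have : h₂ ∈ ({h₁, h₂} : Multiset ℝ) := by simp
      rw [← heqm] at this
      simpa using this
    have hkey : h₁ = a ∧ h₂ = b := by
      rcases hm1 with h1 | h1
      · rcases hm2 with h2 | h2
        · exfalso
          have hbmem : b ∈ ({a, b} : Multiset ℝ) := by simp
          rw [heqm, h1, h2] at hbmem
          simp at hbmem
          linarith
        · exact ⟨h1, h2⟩
      · exfalso
        rcases hm2 with h2 | h2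
        · rw [h1] at hle; rw [h2] at hle; linarith
        · have hamem : a ∈ ({a, b} : Multiset ℝ) := by simp
          rw [heqm, h1, h2] at hamem
          simp at hamem
          linarith
    constructor
    · intro h
      rw [h] at hgt
      exact absurd hgt (lt_irrefl _)
    · intro _
      rw [← hS_def, hkey.1, hkey.2]
      exact ⟨haS, hbS⟩
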